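/- For every integer t ≥ 3, the polynomial t·x is a Hilbert polynomial. -/

import Mathlib

open Polynomial

noncomputable section HilbAux

/-- The submonoid of `ℕ × ℕ` realizing Hilbert function `T * i`. -/
def hilbS (T : ℕ) : AddSubmonoid (ℕ × ℕ) where
  carrier := {p | p.2 ≤ T * p.1 ∧ p.2 + 1 ≠ T * p.1}
  zero_mem' := by simp
  add_mem' := by
    intro a b ha hb
    obtain ⟨ha1, ha2⟩ := ha
    obtain ⟨hb1, hb2⟩ := hb
    have h : T * (a.1 + b.1) = T * a.1 + T * b.1 := by ring
    refine ⟨?_, ?_⟩ <;> simp only [Prod.fst_add, Prod.snd_add, h] <;> omega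

lemma mem_hilbS (T a b : ℕ) : (a, b) ∈ hilbS T ↔ b ≤ T * a ∧ b + 1 ≠ T * a := Iff.rfl

/-- The degree homomorphism. -/
def hilbDeg (T : ℕ) : ↥(hilbS T) →+ ℕ :=
  (AddMonoidHom.fst ℕ ℕ).comp (hilbS T).subtype

lemma hilbDeg_apply (T : ℕ) (m : ↥(hilbS T)) : hilbDeg T m = m.1.1 := rfl

/-- The set of allowable second coordinates in degree `i`. -/
def hilbFinset (T i : ℕ) : Finset ℕ :=
  (Finset.range (T * i + 1)).filter (fun j => j + 1 ≠ T * i)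

def hilbEquiv (T i : ℕ) : (hilbDeg T ⁻¹' {i} : Set ↥(hilbS T)) ≃ (hilbFinset T i : Finset ℕ) where
  toFun m := ⟨m.1.1.2, by
    obtain ⟨⟨⟨a, b⟩, hab⟩, hm⟩ := m
    rw [mem_hilbS] at hab
    simp only [Set.mem_preimage, Set.mem_singleton_iff, hilbDeg_apply] at hm
    subst hm
    simp only [hilbFinset, Finset.mem_filter, Finset.mem_range]
    exact ⟨by omega, hab.2⟩⟩
  invFun j := ⟨⟨(i, j.1), by
      have hj := j.2
      simp only [hilbFinset, Finset.mem_filter, Finset.mem_range] at hj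
      rw [mem_hilbS]
      exact ⟨by omega, hj.2⟩⟩, by simp [hilbDeg_apply]⟩
  left_inv := by
    rintro ⟨⟨⟨a, b⟩, hab⟩, hm⟩
    simp only [Set.mem_preimage, Set.mem_singleton_iff, hilbDeg_apply] at hm
    subst hm
    rfl
  right_inv := by rintro ⟨j, hj⟩; rfl

lemma hilbFinset_card (T i : ℕ) (hT : 3 ≤ T) (hi : 1 ≤ i) : (hilbFinset T i).card = T * i := by
  have h3 : 3 ≤ T * i := le_trans (by omega) (Nat.mul_le_mul hT hi)
  have h1 : hilbFinset T i = (Finset.range (T * i + 1)).erase (T * i - 1) := by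
    ext j
    simp only [hilbFinset, Finset.mem_filter, Finset.mem_range, Finset.mem_erase]
    omega
  rw [h1, Finset.card_erase_of_mem (by simp only [Finset.mem_range]; omega),
    Finset.card_range]
  omega

lemma gradeBy_eq_supported (T i : ℕ) :
    AddMonoidAlgebra.gradeBy ℚ (hilbDeg T) i = AddMonoidAlgebra.supported ℚ ℚ (hilbDeg T ⁻¹' {i}) := by
  ext a
  rw [AddMonoidAlgebra.mem_gradeBy_iff, AddMonoidAlgebra.mem_supported]

def hilbPieceEquiv (T i : ℕ) :
    ↥(AddMonoidAlgebra.gradeBy ℚ (hilbDeg T) i) ≃ₗ[ℚ] ((hilbFinset T i : Finset ℕ) →₀ ℚ) :=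
  (LinearEquiv.ofEq _ _ (gradeBy_eq_supported T i)).trans
    ((AddMonoidAlgebra.supportedEquivFinsupp _).trans (Finsupp.domLCongr (hilbEquiv T i)))

instance hilbFD (T i : ℕ) : FiniteDimensional ℚ (AddMonoidAlgebra.gradeBy ℚ (hilbDeg T) i) :=
  Module.Finite.equiv (hilbPieceEquiv T i).symm

lemma hilb_finrank (T i : ℕ) (hT : 3 ≤ T) (hi : 1 ≤ i) :
    Module.finrank ℚ (AddMonoidAlgebra.gradeBy ℚ (hilbDeg T) i) = T * i := by
  rw [(hilbPieceEquiv T i).finrank_eq, Module.finrank_finsupp_self,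
    Fintype.card_coe, hilbFinset_card T i hT hi]

lemma hilb_single_mem_adjoin (T : ℕ) (hT : 3 ≤ T) :
    ∀ (n : ℕ) (m : ↥(hilbS T)), m.1.1 = n →
      (AddMonoidAlgebra.single m (1 : ℚ)) ∈
        Algebra.adjoin ℚ
          ((AddMonoidAlgebra.gradeBy ℚ (hilbDeg T) 1 :
              Submodule ℚ (AddMonoidAlgebra ℚ ↥(hilbS T))) :
            Set (AddMonoidAlgebra ℚ ↥(hilbS T))) := by
  intro n
  induction n with
  | zero =>
    intro m hm
    obtain ⟨⟨a, b⟩, hab⟩ := m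
    simp only at hm
    subst hm
    rw [mem_hilbS] at hab
    have hb0 : b = 0 := by omega
    subst hb0
    have h0 : (⟨(0, 0), hab⟩ : ↥(hilbS T)) = 0 := rfl
    rw [h0]
    rw [← AddMonoidAlgebra.one_def]
    exact one_mem _
  | succ n ih =>
    rintro ⟨⟨a, j⟩, hab⟩ hm
    simp only at hm
    subst hm
    rw [mem_hilbS] at hab
    obtain ⟨hj1, hj2⟩ := hab
    have hTn : T * (n + 1) = T * n + T := by ring
    have hTn3 : T * n = 0 ∨ 3 ≤ T * n := by
      rcases Nat.eq_zero_or_pos n with h | h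
      · left; simp [h]
      · right; exact le_trans (by omega) (Nat.mul_le_mul hT h)
    have key : ∃ g jr : ℕ, g + jr = j ∧ g ≤ T ∧ g + 1 ≠ T ∧ jr ≤ T * n ∧ jr + 1 ≠ T * n := by
      by_cases h1 : j = T * (n + 1)
      · exact ⟨T, T * n, by omega, le_rfl, by omega, le_rfl, by omega⟩
      · by_cases h2 : T * n ≤ j
        · exact ⟨j - T * n, T * n, by omega, by omega, by omega, le_rfl, by omega⟩
        · by_cases h3 : j + 1 = T * n
          · exact ⟨1, j - 1, by omega, by omega, by omega, by omega, by omega⟩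
          · exact ⟨0, j, by omega, by omega, by omega, by omega, by omega⟩
    obtain ⟨g, jr, hsum, hg1, hg2, hjr1, hjr2⟩ := key
    have hmgmem : ((1 : ℕ), g) ∈ hilbS T := by rw [mem_hilbS]; omega
    have hmrmem : (n, jr) ∈ hilbS T := by rw [mem_hilbS]; exact ⟨hjr1, hjr2⟩
    set mg : ↥(hilbS T) := ⟨(1, g), hmgmem⟩ with hmg
    set mr : ↥(hilbS T) := ⟨(n, jr), hmrmem⟩ with hmr
    have hdecomp : (⟨(n + 1, j), ⟨hj1, hj2⟩⟩ : ↥(hilbS T)) = mg + mr := by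
      apply Subtype.ext
      show ((n + 1 : ℕ), j) = ((1 : ℕ), g) + ((n : ℕ), jr)
      rw [Prod.mk_add_mk]
      exact Prod.ext (by omega) (by omega)
    rw [hdecomp]
    have hmul : (AddMonoidAlgebra.single (mg + mr) (1 : ℚ)) =
        AddMonoidAlgebra.single mg (1 : ℚ) * AddMonoidAlgebra.single mr (1 : ℚ) := by
      rw [AddMonoidAlgebra.single_mul_single, mul_one]
    rw [hmul]
    refine mul_mem ?_ (ih mr rfl)
    apply Algebra.subset_adjoin
    have hmem := AddMonoidAlgebra.single_mem_gradeBy (R := ℚ) (hilbDeg T) mg (1 : ℚ)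
    have hdeg : hilbDeg T mg = 1 := rfl
    rw [hdeg] at hmem
    exact hmem

lemma hilb_adjoin_eq_top (T : ℕ) (hT : 3 ≤ T) :
    Algebra.adjoin ℚ
      ((AddMonoidAlgebra.gradeBy ℚ (hilbDeg T) 1 :
          Submodule ℚ (AddMonoidAlgebra ℚ ↥(hilbS T))) :
        Set (AddMonoidAlgebra ℚ ↥(hilbS T))) = ⊤ := by
  rw [eq_top_iff]
  rintro x -
  induction x using AddMonoidAlgebra.induction with
  | zero => exact zero_mem _
  | single_add m c f _ _ ihf =>
    refine add_mem ?_ ihf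
    have h : (AddMonoidAlgebra.single m c : AddMonoidAlgebra ℚ ↥(hilbS T)) =
        AddMonoidAlgebra.single 0 c * AddMonoidAlgebra.single m (1 : ℚ) := by
      rw [AddMonoidAlgebra.single_mul_single, zero_add, mul_one]
    have halg : (AddMonoidAlgebra.single (0 : ↥(hilbS T)) c : AddMonoidAlgebra ℚ ↥(hilbS T)) =
        algebraMap ℚ (AddMonoidAlgebra ℚ ↥(hilbS T)) c := by
      simp [AddMonoidAlgebra.coe_algebraMap]
    show (AddMonoidAlgebra.single m c : AddMonoidAlgebra ℚ ↥(hilbS T)) ∈ _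
    rw [h, halg]
    exact mul_mem (Subalgebra.algebraMap_mem _ c) (hilb_single_mem_adjoin T hT m.1.1 m rfl)

end HilbAux

/-- A polynomial `f ∈ ℚ[x]` is a *Hilbert polynomial* if there exist a field `k`,
a standard graded `k`-algebra `R` (a commutative `ℕ`-graded `k`-algebra with
finite-dimensional graded pieces, generated as a `k`-algebra by its degree-one part)
and an `N₀` such that `dim_k R_i = f(i)` for all `i ≥ N₀`. -/
def IsHilbertPolynomial (f : Polynomial ℚ) : Prop :=
  ∃ (k : Type) (R : Type) (_ : Field k) (_ : CommRing R) (_ : Algebra k R)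
    (𝒜 : ℕ → Submodule k R) (_ : GradedAlgebra 𝒜),
    (∀ i : ℕ, FiniteDimensional k (𝒜 i)) ∧
    Algebra.adjoin k ((𝒜 1 : Submodule k R) : Set R) = ⊤ ∧
    ∃ N₀ : ℕ, ∀ i : ℕ, N₀ ≤ i → (Module.finrank k (𝒜 i) : ℚ) = f.eval (i : ℚ)

theorem sign_patterns_stmt4 (t : ℤ) (ht : 3 ≤ t) :
    IsHilbertPolynomial (Polynomial.C (t : ℚ) * Polynomial.X) := by
  set T : ℕ := t.toNat with hTdef
  have hT : 3 ≤ T := by omega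
  have hTQ : ((T : ℕ) : ℚ) = (t : ℚ) := by
    exact_mod_cast congrArg (fun z : ℤ => (z : ℚ)) (Int.toNat_of_nonneg (by omega : (0:ℤ) ≤ t))
  refine ⟨ℚ, AddMonoidAlgebra ℚ ↥(hilbS T), inferInstance, inferInstance, inferInstance,
    AddMonoidAlgebra.gradeBy ℚ (hilbDeg T), AddMonoidAlgebra.gradeBy.gradedAlgebra (hilbDeg T),
    fun i => hilbFD T i, hilb_adjoin_eq_top T hT, 1, ?_⟩
  intro i hi
  rw [hilb_finrank T i hT hi, Polynomial.eval_mul, Polynomial.eval_C, Polynomial.eval_X]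
  push_cast
  rw [hTQ]
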